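/- arXiv:1005.4033 — 2 statements merged into one kernel-verified Lean document; each statement's English description precedes it below -/
import Mathlib

section
/- Let x,y ∈ Σ^n and B : Σ → (Σ')^{n'}, with λ_B = max over distinct a,b ∈ Σ of lcs(B(a),B(b))/n'. Then lcs(x ⊛ B, y ⊛ B) ≤ n'·lcs(x,y) + 4nn'·√λ_B. -/
namespace EditDist

variable {α : Type*}

/-- `Chain R k x y` means `x` can be transformed into `y` by exactly `k` steps of `R`. -/
def Chain (R : List α → List α → Prop) : ℕ → List α → List α → Prop
  | 0, x, y => x = y
  | k+1, x, y => ∃ z, R x z ∧ Chain R k z y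

/-- one character insertion -/
def InsStep (x y : List α) : Prop := ∃ (p s : List α) (a : α), x = p ++ s ∧ y = p ++ a :: s

/-- one character deletion -/
def DelStep (x y : List α) : Prop := InsStep y x

/-- one character substitution -/
def SubStep (x y : List α) : Prop := ∃ (p s : List α) (a b : α), x = p ++ a :: s ∧ y = p ++ b :: s

/-- edit distance with insertions and deletions only -/
noncomputable def edd (x y : List α) : ℕ :=
  sInf {k | Chain (fun u v => InsStep u v ∨ DelStep u v) k x y}

/-- the usual edit distance: insertions, deletions and substitutions -/
noncomputable def ed (x y : List α) : ℕ :=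
  sInf {k | Chain (fun u v => InsStep u v ∨ DelStep u v ∨ SubStep u v) k x y}

/-- length of a longest common subsequence -/
noncomputable def lcs (x y : List α) : ℕ :=
  sSup {k | ∃ z : List α, z.length = k ∧ z.Sublist x ∧ z.Sublist y}

end EditDist

open EditDist

/-- substitution product of a string with a block map: replace each character `a` by `B a`. -/
def sprod {σ σ' : Type*} {n : ℕ} (x : Fin n → σ) (B : σ → List σ') : List σ' :=
  (List.ofFn x).flatMap B
namespace EditDist
variable {α : Type*}

lemma lcs_bddAbove (u v : List α) : BddAbove {k | ∃ z : List α, z.length = k ∧ z.Sublist u ∧ z.Sublist v} :=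
  ⟨u.length, fun _ ⟨_, hz, hzu, _⟩ => hz ▸ hzu.length_le⟩

lemma lcs_nonempty (u v : List α) : {k | ∃ z : List α, z.length = k ∧ z.Sublist u ∧ z.Sublist v}.Nonempty :=
  ⟨0, [], rfl, List.nil_sublist _, List.nil_sublist _⟩

lemma le_lcs {u v z : List α} (hu : z.Sublist u) (hv : z.Sublist v) : z.length ≤ lcs u v :=
  le_csSup (lcs_bddAbove u v) ⟨z, rfl, hu, hv⟩

lemma lcs_spec (u v : List α) : ∃ z : List α, z.length = lcs u v ∧ z.Sublist u ∧ z.Sublist v :=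
  Nat.sSup_mem (lcs_nonempty u v) (lcs_bddAbove u v)

end EditDist
lemma sublist_flatten_decomp {α : Type*} :
    ∀ (L : List (List α)) (z : List α), z.Sublist L.flatten →
    ∃ zs : List (List α), ∃ hl : zs.length = L.length, z = zs.flatten ∧
      ∀ i (h : i < L.length), (zs[i]'(by omega)).Sublist (L[i]) := by
  intro L
  induction L with
  | nil =>
    intro z hz
    exact ⟨[], rfl, by simpa using (List.sublist_nil.1 (by simpa using hz)), by simp⟩
  | cons a L ih =>
    intro z hz
    rw [List.flatten_cons, List.sublist_append_iff] at hz
    obtain ⟨z1, z2, rfl, h1, h2⟩ := hz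
    obtain ⟨zs, hlen, rfl, hsub⟩ := ih z2 h2
    refine ⟨z1 :: zs, by simp [hlen], by simp, ?_⟩
    intro i h
    cases i with
    | zero => simpa using h1
    | succ i => simpa using hsub i (by simpa using h)
lemma drop_take_infix {α : Type*} (z : List α) {a a' b b' : ℕ} (ha : a ≤ a') (hb : b' ≤ b) :
    ((z.take b').drop a').IsInfix ((z.take b).drop a) := by
  have h1 : z.take b' = (z.take b).take b' := by rw [List.take_take, min_eq_left hb]
  rw [h1, List.drop_take]
  have h2 : (z.take b).drop a' = ((z.take b).drop a).drop (a' - a) := by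
    rw [List.drop_drop]; congr 1; omega
  rw [h2]
  exact (List.take_prefix _ _).isInfix.trans (List.drop_suffix _ _).isInfix

lemma sublist_map_getD {α : Type*} (d : α) :
    ∀ (u : List α) (is : List ℕ), is.Pairwise (· < ·) → (∀ i ∈ is, i < u.length) →
      (is.map (fun i => u.getD i d)).Sublist u := by
  intro u
  induction u with
  | nil =>
    intro is _ hlt
    have : is = [] := by
      cases is with
      | nil => rfl
      | cons i is => exact absurd (hlt i (by simp)) (by simp)
    simp [this]
  | cons a u ih =>
    intro is hp hlt
    cases is with
    | nil => simp
    | cons i is =>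
      have hp1 := (List.pairwise_cons.1 hp).1
      have hp2 := (List.pairwise_cons.1 hp).2
      by_cases hi : i = 0
      · subst hi
        have hpos : ∀ j ∈ is, 1 ≤ j := fun j hj => hp1 j hj
        have hmap : is.map (fun j => (a :: u).getD j d) =
            (is.map (· - 1)).map (fun j => u.getD j d) := by
          rw [List.map_map]
          refine List.map_congr_left fun j hj => ?_
          obtain ⟨k, rfl⟩ : ∃ k, j = k + 1 := ⟨j - 1, by have := hpos j hj; omega⟩
          simp
        have hsub : ((is.map (· - 1)).map (fun j => u.getD j d)).Sublist u := by
          refine ih _ (List.pairwise_map.2 ?_) ?_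
          · exact hp2.imp_of_mem fun {x y} hx hy hxy => by
              have := hpos x hx; have := hpos y hy; omega
          · intro j hj
            simp only [List.mem_map] at hj
            obtain ⟨k, hk, rfl⟩ := hj
            have h1 := hlt k (by simp [hk])
            have h2 := hpos k hk
            simp at h1 ⊢; omega
        have hcons : ((0 :: is).map (fun j => (a :: u).getD j d)) =
            a :: (is.map (fun j => (a :: u).getD j d)) := by simp
        rw [hcons, hmap]
        exact List.Sublist.cons₂ a hsub
      · have hpos : ∀ j ∈ i :: is, 1 ≤ j := by
          intro j hj
          rcases List.mem_cons.1 hj with rfl | hj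
          · omega
          · have := hp1 j hj; omega
        have hmap : (i :: is).map (fun j => (a :: u).getD j d) =
            ((i :: is).map (· - 1)).map (fun j => u.getD j d) := by
          rw [List.map_map]
          refine List.map_congr_left fun j hj => ?_
          obtain ⟨k, rfl⟩ : ∃ k, j = k + 1 := ⟨j - 1, by have := hpos j hj; omega⟩
          simp
        rw [hmap]
        refine List.Sublist.cons a ?_
        refine ih _ (List.pairwise_map.2 ?_) ?_
        · exact hp.imp_of_mem fun {x y} hx hy hxy => by
            have := hpos x hx; have := hpos y hy; omega
        · intro j hj
          simp only [List.mem_map] at hj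
          obtain ⟨k, hk, rfl⟩ := hj
          have := hlt k hk; simp at this ⊢
          have := hpos k hk; omega
lemma mirsky (n' : ℕ) (c : ℕ × ℕ → ℕ) :
    ∀ (N : ℕ) (H : Finset (ℕ × ℕ)), H.card ≤ N →
    (∀ p ∈ H, ∀ q ∈ H, p.1 < q.1 → p.2 ≤ q.2) →
    (∀ i, ∑ p ∈ H.filter (fun p => p.1 = i), c p ≤ n') →
    (∀ j, ∑ p ∈ H.filter (fun p => p.2 = j), c p ≤ n') →
    ∃ l : List (ℕ × ℕ), (∀ p ∈ l, p ∈ H) ∧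
      l.Chain' (fun p q => p.1 < q.1 ∧ p.2 < q.2) ∧ ∑ p ∈ H, c p ≤ n' * l.length := by
  intro N
  induction N with
  | zero =>
    intro H hcard _ _ _
    have : H = ∅ := Finset.card_eq_zero.1 (Nat.le_zero.1 hcard)
    exact ⟨[], by simp [this], List.isChain_nil, by simp [this]⟩
  | succ N ih =>
    intro H hcard hmono hrow hcol
    rcases H.eq_empty_or_nonempty with rfl | hne
    · exact ⟨[], by simp, List.isChain_nil, by simp⟩
    have hne1 : (H.image Prod.fst).Nonempty := hne.image _
    set i0 := (H.image Prod.fst).min' hne1 with hi0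
    have hH1 : (H.filter (fun p => p.1 = i0)).Nonempty := by
      obtain ⟨p, hp, hp1⟩ := Finset.mem_image.1 ((H.image Prod.fst).min'_mem hne1)
      exact ⟨p, Finset.mem_filter.2 ⟨hp, hp1⟩⟩
    have hne2 : ((H.filter (fun p => p.1 = i0)).image Prod.snd).Nonempty := hH1.image _
    set j0 := ((H.filter (fun p => p.1 = i0)).image Prod.snd).min' hne2 with hj0
    have hm : (i0, j0) ∈ H := by
      have hmin := Finset.min'_mem _ hne2
      rw [← hj0] at hmin
      obtain ⟨q, hq, hq2⟩ := Finset.mem_image.1 hmin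
      obtain ⟨hqH, hq1⟩ := Finset.mem_filter.1 hq
      have : q = (i0, j0) := Prod.ext hq1 hq2
      exact this ▸ hqH
    have hi0le : ∀ p ∈ H, i0 ≤ p.1 := fun p hp =>
      Finset.min'_le _ _ (Finset.mem_image.2 ⟨p, hp, rfl⟩)
    have hj0le : ∀ p ∈ H, j0 ≤ p.2 := by
      intro p hp
      by_cases h1 : p.1 = i0
      · exact Finset.min'_le _ _ (Finset.mem_image.2 ⟨p, Finset.mem_filter.2 ⟨hp, h1⟩, rfl⟩)
      · have : i0 < p.1 := lt_of_le_of_ne (hi0le p hp) (Ne.symm h1)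
        exact hmono _ hm _ hp this
    set S := H.filter (fun q => q.1 = i0 ∨ q.2 = j0) with hS
    set H' := H.filter (fun q => ¬(q.1 = i0 ∨ q.2 = j0)) with hH'
    -- S lies in a single row or column
    have hSsum : ∑ p ∈ S, c p ≤ n' := by
      by_cases hall : ∀ q ∈ S, q.1 = i0
      · calc ∑ p ∈ S, c p ≤ ∑ p ∈ H.filter (fun p => p.1 = i0), c p := by
              refine Finset.sum_le_sum_of_subset fun q hq => ?_
              exact Finset.mem_filter.2 ⟨(Finset.mem_filter.1 hq).1, hall q hq⟩
          _ ≤ n' := hrow i0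
      · push_neg at hall
        obtain ⟨a, haS, ha1⟩ := hall
        have ha2 : a.2 = j0 := ((Finset.mem_filter.1 haS).2).resolve_left ha1
        have haH : a ∈ H := (Finset.mem_filter.1 haS).1
        have hai : i0 < a.1 := lt_of_le_of_ne (hi0le a haH) (Ne.symm ha1)
        have hall2 : ∀ q ∈ S, q.2 = j0 := by
          intro q hqS
          have hqH : q ∈ H := (Finset.mem_filter.1 hqS).1
          rcases (Finset.mem_filter.1 hqS).2 with hq1 | hq2
          · have := hmono q hqH a haH (hq1 ▸ hai)
            have := hj0le q hqH
            omega
          · exact hq2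
        calc ∑ p ∈ S, c p ≤ ∑ p ∈ H.filter (fun p => p.2 = j0), c p := by
              refine Finset.sum_le_sum_of_subset fun q hq => ?_
              exact Finset.mem_filter.2 ⟨(Finset.mem_filter.1 hq).1, hall2 q hq⟩
          _ ≤ n' := hcol j0
    have hmS : (i0, j0) ∈ S := Finset.mem_filter.2 ⟨hm, Or.inl rfl⟩
    have hcard' : H'.card ≤ N := by
      have hss : H' ⊂ H := by
        refine Finset.ssubset_iff_of_subset (Finset.filter_subset _ _) |>.2 ?_
        exact ⟨(i0, j0), hm, by simp [hH']⟩
      have := Finset.card_lt_card hss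
      omega
    have hstrict : ∀ q ∈ H', i0 < q.1 ∧ j0 < q.2 := by
      intro q hq
      obtain ⟨hqH, hq2⟩ := Finset.mem_filter.1 hq
      push_neg at hq2
      exact ⟨lt_of_le_of_ne (hi0le q hqH) (Ne.symm hq2.1),
             lt_of_le_of_ne (hj0le q hqH) (Ne.symm hq2.2)⟩
    obtain ⟨l', hl'mem, hl'chain, hl'sum⟩ := ih H' hcard'
      (fun p hp q hq => hmono p (Finset.mem_filter.1 hp).1 q (Finset.mem_filter.1 hq).1)
      (fun i => le_trans (Finset.sum_le_sum_of_subset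
        (Finset.filter_subset_filter _ (Finset.filter_subset _ _))) (hrow i))
      (fun j => le_trans (Finset.sum_le_sum_of_subset
        (Finset.filter_subset_filter _ (Finset.filter_subset _ _))) (hcol j))
    refine ⟨(i0, j0) :: l', ?_, ?_, ?_⟩
    · intro p hp
      rcases List.mem_cons.1 hp with rfl | hp
      · exact hm
      · exact (Finset.mem_filter.1 (hl'mem p hp)).1
    · refine List.isChain_cons.2 ⟨?_, hl'chain⟩
      intro q hq
      have : q ∈ l' := by
        cases l' with
        | nil => simp at hq
        | cons b l'' => simp at hq; simp [hq]
      exact hstrict q (hl'mem q this)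
    · have hsplit : ∑ p ∈ S, c p + ∑ p ∈ H', c p = ∑ p ∈ H, c p :=
        Finset.sum_filter_add_sum_filter_not H _ c
      simp only [List.length_cons]
      calc ∑ p ∈ H, c p = ∑ p ∈ S, c p + ∑ p ∈ H', c p := hsplit.symm
        _ ≤ n' + n' * l'.length := Nat.add_le_add hSsum hl'sum
        _ = n' * (l'.length + 1) := by ring
lemma flatten_block {α : Type*} (zs : List (List α)) (i : ℕ) (h : i < zs.length) :
    zs[i] = (zs.flatten.take ((zs.take (i+1)).flatten.length)).drop ((zs.take i).flatten.length) := by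
  have h1 : zs.flatten = (zs.take (i+1)).flatten ++ (zs.drop (i+1)).flatten := by
    rw [← List.flatten_append, List.take_append_drop]
  rw [h1, List.take_left]
  have h2 : (zs.take (i+1)).flatten = (zs.take i).flatten ++ zs[i] := by
    rw [List.take_succ, List.getElem?_eq_getElem h, List.flatten_append]
    simp
  rw [h2, List.drop_left]
theorem stmt6 {σ σ' : Type*} {n n' : ℕ} (x y : Fin n → σ)
    (B : σ → List σ') (hB : ∀ a, (B a).length = n')
    (lam : ℝ) (hlam0 : 0 ≤ lam)
    (hlam : ∀ a b : σ, a ≠ b → (lcs (B a) (B b) : ℝ) ≤ lam * n') :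
    (lcs (sprod x B) (sprod y B) : ℝ) ≤
      (n' : ℝ) * lcs (List.ofFn x) (List.ofFn y) + 4 * n * n' * Real.sqrt lam := by
  classical
  obtain ⟨z, hzlen, hzx, hzy⟩ := lcs_spec (sprod x B) (sprod y B)
  rw [← hzlen]
  by_cases hbig : (1:ℝ) ≤ 4 * Real.sqrt lam
  · -- trivial case: lcs ≤ n * n' ≤ 4 n n' √λ
    have hlen : (sprod x B).length = n * n' := by
      simp [sprod, List.length_flatMap, Function.comp_def, hB, Nat.mul_comm]
    have h1 : z.length ≤ n * n' := by have := hzx.length_le; omega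
    have h2 : (0:ℝ) ≤ (n':ℝ) * lcs (List.ofFn x) (List.ofFn y) := by positivity
    have h3 : (z.length:ℝ) ≤ (n:ℝ) * n' := by exact_mod_cast h1
    nlinarith [Real.sqrt_nonneg lam]
  · push_neg at hbig
    have hsmall : Real.sqrt lam < 1/4 := by linarith
    have hlamle : lam ≤ Real.sqrt lam := by
      have h := Real.sq_sqrt hlam0
      nlinarith [Real.sqrt_nonneg lam]
    -- decompose z along the x-blocks
    have hx2 : z.Sublist ((List.ofFn x).map B).flatten := by
      rw [← List.flatMap_def]; exact hzx
    have hy2 : z.Sublist ((List.ofFn y).map B).flatten := by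
      rw [← List.flatMap_def]; exact hzy
    obtain ⟨zs, hzsl, hzf, hzsub⟩ := sublist_flatten_decomp _ z hx2
    obtain ⟨ws, hwsl, hwf, hwsub⟩ := sublist_flatten_decomp _ z hy2
    have hzsn : zs.length = n := by simpa using hzsl
    have hwsn : ws.length = n := by simpa using hwsl
    have hzsub' : ∀ i (h : i < n), (zs[i]'(by omega)).Sublist (B (x ⟨i, h⟩)) := by
      intro i h
      have := hzsub i (by simpa using h)
      simpa using this
    have hwsub' : ∀ j (h : j < n), (ws[j]'(by omega)).Sublist (B (y ⟨j, h⟩)) := by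
      intro j h
      have := hwsub j (by simpa using h)
      simpa using this
    set A : ℕ → ℕ := fun i => ((zs.take i).flatten).length with hA
    set C : ℕ → ℕ := fun j => ((ws.take j).flatten).length with hC
    have hA0 : A 0 = 0 := rfl
    have hC0 : C 0 = 0 := rfl
    have hAmono : Monotone A := monotone_nat_of_le_succ (fun i => by
      simp only [hA, List.take_succ, List.flatten_append, List.length_append]; omega)
    have hCmono : Monotone C := monotone_nat_of_le_succ (fun j => by
      simp only [hC, List.take_succ, List.flatten_append, List.length_append]; omega)
    have hAn : A n = z.length := by
      simp only [hA]; rw [← hzsn, List.take_length, ← hzf]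
    have hCn : C n = z.length := by
      simp only [hC]; rw [← hwsn, List.take_length, ← hwf]
    have hAsucc : ∀ i (h : i < n), A (i+1) = A i + (zs[i]'(by omega)).length := by
      intro i h
      simp only [hA, List.take_succ, List.getElem?_eq_getElem (show i < zs.length by omega),
        List.flatten_append, List.length_append]
      simp
    have hCsucc : ∀ j (h : j < n), C (j+1) = C j + (ws[j]'(by omega)).length := by
      intro j h
      simp only [hC, List.take_succ, List.getElem?_eq_getElem (show j < ws.length by omega),
        List.flatten_append, List.length_append]
      simp
    have hAle : ∀ i, i < n → A (i+1) ≤ A i + n' := by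
      intro i h; rw [hAsucc i h]
      have h2 := (hzsub' i h).length_le
      rw [hB] at h2; omega
    have hCle : ∀ j, j < n → C (j+1) ≤ C j + n' := by
      intro j h; rw [hCsucc j h]
      have h2 := (hwsub' j h).length_le
      rw [hB] at h2; omega
    have hblockx : ∀ i (h : i < n), zs[i]'(by omega) = (z.take (A (i+1))).drop (A i) := by
      intro i h
      have hfb := flatten_block zs i (by omega)
      rw [← hzf] at hfb
      exact hfb
    have hblocky : ∀ j (h : j < n), ws[j]'(by omega) = (z.take (C (j+1))).drop (C j) := by
      intro j h
      have hfb := flatten_block ws j (by omega)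
      rw [← hwf] at hfb
      exact hfb
    set f : ℕ → ℕ → List σ' :=
      fun i j => (z.take (min (A (i+1)) (C (j+1)))).drop (max (A i) (C j)) with hf
    set c : ℕ × ℕ → ℕ := fun p => (f p.1 p.2).length with hcdef
    have hfx : ∀ (i j : ℕ) (h : i < n), (f i j).Sublist (B (x ⟨i, h⟩)) := by
      intro i j h
      have hinf : (f i j).IsInfix ((z.take (A (i+1))).drop (A i)) :=
        drop_take_infix z (le_max_left _ _) (min_le_left _ _)
      rw [← hblockx i h] at hinf
      exact hinf.sublist.trans (hzsub' i h)
    have hfy : ∀ (i j : ℕ) (h : j < n), (f i j).Sublist (B (y ⟨j, h⟩)) := by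
      intro i j h
      have heq : f i j = (z.take (min (C (j+1)) (A (i+1)))).drop (max (C j) (A i)) := by
        simp only [hf]; rw [min_comm, max_comm]
      have hinf : (f i j).IsInfix ((z.take (C (j+1))).drop (C j)) := by
        rw [heq]
        exact drop_take_infix z (le_max_left _ _) (min_le_left _ _)
      rw [← hblocky j h] at hinf
      exact hinf.sublist.trans (hwsub' j h)
    have hclen : ∀ i j, i < n → c (i, j) = min (A (i+1)) (C (j+1)) - max (A i) (C j) := by
      intro i j h
      have hble : min (A (i+1)) (C (j+1)) ≤ z.length :=
        le_trans (min_le_left _ _) (by rw [← hAn]; exact hAmono (by omega))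
      simp only [hcdef, hf, List.length_drop, List.length_take]
      omega
    have hrowsum : ∀ i, i < n → ∑ j ∈ Finset.range n, c (i, j) = A (i+1) - A i := by
      intro i h
      have hgm : Monotone (fun j => max (A i) (min (A (i+1)) (C j))) := by
        intro a b hab
        have := hCmono hab
        dsimp only
        omega
      have hterm : ∀ j ∈ Finset.range n, c (i,j) =
          max (A i) (min (A (i+1)) (C (j+1))) - max (A i) (min (A (i+1)) (C j)) := by
        intro j _
        rw [hclen i j h]
        have h1 : A i ≤ A (i+1) := hAmono (by omega)
        have h2 : C j ≤ C (j+1) := hCmono (by omega)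
        omega
      rw [Finset.sum_congr rfl hterm, Finset.sum_range_tsub hgm n]
      have h1 : A i ≤ A (i+1) := hAmono (by omega)
      have h2 : A (i+1) ≤ C n := by rw [hCn, ← hAn]; exact hAmono (by omega)
      have h3 : C 0 = 0 := hC0
      omega
    have hcolsum : ∀ j, j < n → ∑ i ∈ Finset.range n, c (i, j) = C (j+1) - C j := by
      intro j h
      have hgm : Monotone (fun i => max (C j) (min (C (j+1)) (A i))) := by
        intro a b hab
        have := hAmono hab
        dsimp only
        omega
      have hterm : ∀ i ∈ Finset.range n, c (i,j) =
          max (C j) (min (C (j+1)) (A (i+1))) - max (C j) (min (C (j+1)) (A i)) := by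
        intro i hi
        rw [hclen i j (Finset.mem_range.1 hi)]
        have h1 : C j ≤ C (j+1) := hCmono (by omega)
        have h2 : A i ≤ A (i+1) := hAmono (by omega)
        omega
      rw [Finset.sum_congr rfl hterm, Finset.sum_range_tsub hgm n]
      have h1 : C j ≤ C (j+1) := hCmono (by omega)
      have h2 : C (j+1) ≤ A n := by rw [hAn, ← hCn]; exact hCmono (by omega)
      have h3 : A 0 = 0 := hA0
      omega
    set S : Finset (ℕ × ℕ) := (Finset.range n) ×ˢ (Finset.range n) with hSdef
    have hmemS : ∀ p ∈ S, p.1 < n ∧ p.2 < n := by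
      intro p hp
      simp only [hSdef, Finset.mem_product, Finset.mem_range] at hp
      exact hp
    have htot : ∑ p ∈ S, c p = z.length := by
      rw [hSdef, Finset.sum_product]
      have hcongr : ∀ i ∈ Finset.range n, ∑ j ∈ Finset.range n, c (i, j) = A (i+1) - A i :=
        fun i hi => hrowsum i (Finset.mem_range.1 hi)
      rw [Finset.sum_congr rfl hcongr, Finset.sum_range_tsub hAmono n, hAn, hA0]
      omega
    have hmonoNZ : ∀ p q : ℕ × ℕ, p.1 < n → q.1 < n → c p ≠ 0 → c q ≠ 0 →
        p.1 < q.1 → p.2 ≤ q.2 := by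
      intro p q hp hq hcp hcq hlt
      by_contra hcon
      push_neg at hcon
      have e1 := hclen p.1 p.2 hp
      have e2 := hclen q.1 q.2 hq
      rw [Prod.mk.eta] at e1 e2
      have h3 : C (q.2+1) ≤ C p.2 := hCmono (by omega)
      have h4 : A (p.1+1) ≤ A q.1 := hAmono (by omega)
      omega
    have hNZcard : (S.filter (fun p => c p ≠ 0)).card ≤ 2 * n := by
      have hmaps : ∀ p ∈ S.filter (fun p => c p ≠ 0), p.1 + p.2 ∈ Finset.range (2*n) := by
        intro p hp
        obtain ⟨h1, h2⟩ := hmemS p (Finset.mem_filter.1 hp).1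
        simp only [Finset.mem_range]
        omega
      refine le_trans (Finset.card_le_card_of_injOn (fun p => p.1 + p.2) hmaps ?_) (by simp)
      intro p hp q hq hpq
      rw [Finset.mem_coe] at hp hq
      obtain ⟨hpS, hpc⟩ := Finset.mem_filter.1 hp
      obtain ⟨hqS, hqc⟩ := Finset.mem_filter.1 hq
      obtain ⟨hp1, hp2⟩ := hmemS p hpS
      obtain ⟨hq1, hq2⟩ := hmemS q hqS
      simp only at hpq
      rcases lt_trichotomy p.1 q.1 with h | h | h
      · have := hmonoNZ p q hp1 hq1 hpc hqc h
        omega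
      · have : p.2 = q.2 := by omega
        exact Prod.ext h this
      · have := hmonoNZ q p hq1 hp1 hqc hpc h
        omega
    set θ : ℝ := Real.sqrt lam * n' with hθdef
    have hθ0 : (0:ℝ) ≤ θ := by positivity
    set Hv : Finset (ℕ × ℕ) := S.filter (fun p => θ < (c p : ℝ)) with hHvdef
    have hHvsub : Hv ⊆ S := Finset.filter_subset _ _
    have hHvNZ : ∀ p ∈ Hv, c p ≠ 0 := by
      intro p hp h0
      have hθlt := (Finset.mem_filter.1 hp).2
      rw [h0] at hθlt
      simp only [Nat.cast_zero] at hθlt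
      linarith
    have hHveq : ∀ p ∈ Hv, ∀ (h1 : p.1 < n) (h2 : p.2 < n), x ⟨p.1, h1⟩ = y ⟨p.2, h2⟩ := by
      intro p hp h1 h2
      by_contra hne
      have hwit := le_lcs (hfx p.1 p.2 h1) (hfy p.1 p.2 h2)
      have hle : (c p : ℝ) ≤ lam * n' := by
        calc (c p : ℝ) ≤ (lcs (B (x ⟨p.1, h1⟩)) (B (y ⟨p.2, h2⟩)) : ℝ) := by
              rw [hcdef]; exact_mod_cast hwit
          _ ≤ lam * n' := hlam _ _ hne
      have hθlt := (Finset.mem_filter.1 hp).2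
      have hn'0 : (0:ℝ) ≤ (n' : ℝ) := Nat.cast_nonneg _
      nlinarith
    have hrowN : ∀ i, ∑ p ∈ Hv.filter (fun p => p.1 = i), c p ≤ n' := by
      intro i
      by_cases hi : i < n
      · calc ∑ p ∈ Hv.filter (fun p => p.1 = i), c p
            ≤ ∑ p ∈ ({i} ×ˢ Finset.range n), c p := by
              refine Finset.sum_le_sum_of_subset ?_
              intro p hp
              obtain ⟨hpH, hp1⟩ := Finset.mem_filter.1 hp
              have h2 := (hmemS p (hHvsub hpH)).2
              simp only [Finset.mem_product, Finset.mem_singleton, Finset.mem_range]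
              exact ⟨hp1, h2⟩
          _ = ∑ j ∈ Finset.range n, c (i, j) := by rw [Finset.sum_product]; simp
          _ = A (i+1) - A i := hrowsum i hi
          _ ≤ n' := by have := hAle i hi; omega
      · have hemp : Hv.filter (fun p => p.1 = i) = ∅ := Finset.filter_false_of_mem (by
          intro p hp
          have := (hmemS p (hHvsub hp)).1
          omega)
        simp [hemp]
    have hcolN : ∀ j, ∑ p ∈ Hv.filter (fun p => p.2 = j), c p ≤ n' := by
      intro j
      by_cases hj : j < n
      · calc ∑ p ∈ Hv.filter (fun p => p.2 = j), c p
            ≤ ∑ p ∈ (Finset.range n ×ˢ {j}), c p := by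
              refine Finset.sum_le_sum_of_subset ?_
              intro p hp
              obtain ⟨hpH, hp2⟩ := Finset.mem_filter.1 hp
              have h1 := (hmemS p (hHvsub hpH)).1
              simp only [Finset.mem_product, Finset.mem_singleton, Finset.mem_range]
              exact ⟨h1, hp2⟩
          _ = ∑ i ∈ Finset.range n, c (i, j) := by rw [Finset.sum_product]; simp
          _ = C (j+1) - C j := hcolsum j hj
          _ ≤ n' := by have := hCle j hj; omega
      · have hemp : Hv.filter (fun p => p.2 = j) = ∅ := Finset.filter_false_of_mem (by
          intro p hp
          have := (hmemS p (hHvsub hp)).2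
          omega)
        simp [hemp]
    obtain ⟨l, hlmem, hlchain, hlsum⟩ := mirsky n' c Hv.card Hv le_rfl
      (fun p hp q hq hlt => hmonoNZ p q (hmemS p (hHvsub hp)).1 (hmemS q (hHvsub hq)).1
        (hHvNZ p hp) (hHvNZ q hq) hlt)
      hrowN hcolN
    have hlen_lcs : l.length ≤ lcs (List.ofFn x) (List.ofFn y) := by
      cases l with
      | nil => simp
      | cons p0 ltail =>
        have hp0 : p0 ∈ Hv := hlmem p0 (by simp)
        have hp0n : p0.1 < n := (hmemS p0 (hHvsub hp0)).1
        set d : σ := x ⟨p0.1, hp0n⟩ with hd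
        haveI : IsTrans (ℕ × ℕ) (fun p q : ℕ × ℕ => p.1 < q.1 ∧ p.2 < q.2) :=
          ⟨fun a b c h1 h2 => ⟨h1.1.trans h2.1, h1.2.trans h2.2⟩⟩
        have hpw : (p0 :: ltail).Pairwise (fun p q => p.1 < q.1 ∧ p.2 < q.2) :=
          List.isChain_iff_pairwise.1 hlchain
        set L := p0 :: ltail with hL
        have hbounds : ∀ p ∈ L, p.1 < n ∧ p.2 < n := fun p hp => hmemS p (hHvsub (hlmem p hp))
        set w := L.map (fun p => (List.ofFn x).getD p.1 d) with hw
        have hwx : w.Sublist (List.ofFn x) := by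
          have hs := sublist_map_getD d (List.ofFn x) (L.map (·.1))
            (List.pairwise_map.2 (hpw.imp fun h => h.1))
            (by
              intro i hi
              simp only [List.mem_map] at hi
              obtain ⟨p, hp, rfl⟩ := hi
              simpa using (hbounds p hp).1)
          rw [hw]
          simpa [List.map_map, Function.comp_def] using hs
        have hweq : w = L.map (fun p => (List.ofFn y).getD p.2 d) := by
          rw [hw]
          refine List.map_congr_left fun p hp => ?_
          obtain ⟨h1, h2⟩ := hbounds p hp
          rw [List.getD_eq_getElem _ _ (by simpa using h1),
              List.getD_eq_getElem _ _ (by simpa using h2)]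
          simp only [List.getElem_ofFn]
          exact hHveq p (hlmem p hp) h1 h2
        have hwy : w.Sublist (List.ofFn y) := by
          rw [hweq]
          have hs := sublist_map_getD d (List.ofFn y) (L.map (·.2))
            (List.pairwise_map.2 (hpw.imp fun h => h.2))
            (by
              intro j hj
              simp only [List.mem_map] at hj
              obtain ⟨p, hp, rfl⟩ := hj
              simpa using (hbounds p hp).2)
          simpa [List.map_map, Function.comp_def] using hs
        have hwlen : w.length = L.length := by rw [hw]; simp
        have := le_lcs hwx hwy
        rw [hwlen] at this
        exact this
    -- light part
    set Lt : Finset (ℕ × ℕ) := S.filter (fun p => ¬ θ < (c p : ℝ)) with hLtdef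
    have hsplit : ∑ p ∈ Hv, c p + ∑ p ∈ Lt, c p = ∑ p ∈ S, c p :=
      Finset.sum_filter_add_sum_filter_not S _ c
    have hlight : (∑ p ∈ Lt, (c p : ℝ)) ≤ 2 * n * θ := by
      have hrw : ∑ p ∈ Lt.filter (fun p => c p ≠ 0), (c p : ℝ) = ∑ p ∈ Lt, (c p : ℝ) :=
        Finset.sum_filter_of_ne (fun p _ h => by
          intro h0
          rw [h0] at h
          simp at h)
      rw [← hrw]
      have hcard : (Lt.filter (fun p => c p ≠ 0)).card ≤ 2 * n := by
        refine le_trans (Finset.card_le_card ?_) hNZcard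
        intro p hp
        obtain ⟨hp1, hp2⟩ := Finset.mem_filter.1 hp
        exact Finset.mem_filter.2 ⟨(Finset.mem_filter.1 hp1).1, hp2⟩
      calc ∑ p ∈ Lt.filter (fun p => c p ≠ 0), (c p : ℝ)
          ≤ (Lt.filter (fun p => c p ≠ 0)).card • θ := by
            refine Finset.sum_le_card_nsmul _ _ θ ?_
            intro p hp
            have := (Finset.mem_filter.1 (Finset.mem_filter.1 hp).1).2
            exact not_lt.1 this
        _ = ((Lt.filter (fun p => c p ≠ 0)).card : ℝ) * θ := by rw [nsmul_eq_mul]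
        _ ≤ 2 * n * θ := by
            refine mul_le_mul_of_nonneg_right ?_ hθ0
            exact_mod_cast hcard
    have hheavy : (∑ p ∈ Hv, (c p : ℝ)) ≤ (n' : ℝ) * lcs (List.ofFn x) (List.ofFn y) := by
      have h1 : ∑ p ∈ Hv, c p ≤ n' * lcs (List.ofFn x) (List.ofFn y) :=
        le_trans hlsum (Nat.mul_le_mul_left _ hlen_lcs)
      calc (∑ p ∈ Hv, (c p : ℝ)) = ((∑ p ∈ Hv, c p : ℕ) : ℝ) := by push_cast; ring
        _ ≤ ((n' * lcs (List.ofFn x) (List.ofFn y) : ℕ) : ℝ) := by exact_mod_cast h1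
        _ = (n' : ℝ) * lcs (List.ofFn x) (List.ofFn y) := by push_cast; ring
    have hzsum : (z.length : ℝ) = (∑ p ∈ Hv, (c p : ℝ)) + ∑ p ∈ Lt, (c p : ℝ) := by
      have : ((∑ p ∈ Hv, c p + ∑ p ∈ Lt, c p : ℕ) : ℝ) = (z.length : ℝ) := by
        rw [hsplit, htot]
      push_cast at this
      linarith
    have hn0 : (0:ℝ) ≤ (n:ℝ) := Nat.cast_nonneg _
    have hn'0 : (0:ℝ) ≤ (n':ℝ) := Nat.cast_nonneg _
    have hfin : 2 * (n:ℝ) * θ ≤ 4 * n * n' * Real.sqrt lam := by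
      rw [hθdef]
      nlinarith [Real.sqrt_nonneg lam]
    linarith
end

section
/- For every b ≥ 2 and strings x,y ∈ Σ^n with n = b^h, the edit distance ed(x,y) is at most twice the E-distance from x to y, i.e., ed(x,y) ≤ 2·E(0,1,1). -/
open EditDist

open scoped Classical

/-- The `E`-distance from the paper (0-indexed).  `Edist x y n b k s u` is the `E`-distance of the
substring of `x` of length `b ^ k` starting at position `s` to position `u` of `y` (a string of
length `n`); `k` is the height of the node in the `b`-ary tree, i.e. `k = h - i` for level `i`.
At the leaves it is the Hamming-type cost; at an internal node it is the sum over the `b`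
children of the minimum over integer shifts `r` of (child distance at the shifted position)
plus `|r|`. -/
noncomputable def Edist {α : Type*} (x y : ℕ → α) (n b : ℕ) : ℕ → ℕ → ℤ → ℝ
  | 0, s, u => if 0 ≤ u ∧ u < (n : ℤ) ∧ x s = y u.toNat then 0 else 1
  | k + 1, s, u =>
      ∑ j ∈ Finset.range b,
        ⨅ r : ℤ, (Edist x y n b k (s + j * b ^ k) (u + (j : ℤ) * (b : ℤ) ^ k + r) + |(r : ℝ)|)

namespace EditDist

abbrev RR (α : Type*) : List α → List α → Prop :=
  fun u v => InsStep u v ∨ DelStep u v ∨ SubStep u v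

lemma chain_append {R : List α → List α → Prop} {j k : ℕ} {x z y : List α}
    (h1 : Chain R j x z) (h2 : Chain R k z y) : Chain R (j + k) x y := by
  induction j generalizing x with
  | zero => rw [Chain] at h1; subst h1; simpa using h2
  | succ j ih =>
    obtain ⟨w, hw, hc⟩ := h1
    rw [Nat.succ_add]
    exact ⟨w, hw, ih hc⟩

lemma chain_del (P C : List α) : Chain (RR α) P.length (P ++ C) C := by
  induction P with
  | nil => simpa [Chain] using rfl
  | cons a P ih =>
    exact ⟨P ++ C, Or.inr (Or.inl ⟨[], P ++ C, a, rfl, rfl⟩), ih⟩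

lemma chain_ins (C Q : List α) : Chain (RR α) Q.length C (C ++ Q) := by
  induction Q generalizing C with
  | nil => simpa [Chain] using rfl
  | cons a Q ih =>
    exact ⟨C ++ [a], Or.inl ⟨C, [], a, by simp, by simp⟩, by
      simpa using ih (C ++ [a])⟩

lemma insStep_left (p : List α) {u v : List α} (h : InsStep u v) : InsStep (p ++ u) (p ++ v) := by
  obtain ⟨q, s, a, rfl, rfl⟩ := h
  exact ⟨p ++ q, s, a, by simp, by simp⟩

lemma rr_left (p : List α) {u v : List α} (h : RR α u v) : RR α (p ++ u) (p ++ v) := by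
  rcases h with h | h | h
  · exact Or.inl (insStep_left p h)
  · exact Or.inr (Or.inl (insStep_left p h))
  · obtain ⟨q, s, a, b, rfl, rfl⟩ := h
    exact Or.inr (Or.inr ⟨p ++ q, s, a, b, by simp, by simp⟩)

lemma insStep_right (q : List α) {u v : List α} (h : InsStep u v) : InsStep (u ++ q) (v ++ q) := by
  obtain ⟨p, s, a, rfl, rfl⟩ := h
  exact ⟨p, s ++ q, a, by simp, by simp⟩

lemma rr_right (q : List α) {u v : List α} (h : RR α u v) : RR α (u ++ q) (v ++ q) := by
  rcases h with h | h | h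
  · exact Or.inl (insStep_right q h)
  · exact Or.inr (Or.inl (insStep_right q h))
  · obtain ⟨p, s, a, b, rfl, rfl⟩ := h
    exact Or.inr (Or.inr ⟨p, s ++ q, a, b, by simp, by simp⟩)

lemma chain_left (p : List α) {k : ℕ} {u v : List α} (h : Chain (RR α) k u v) :
    Chain (RR α) k (p ++ u) (p ++ v) := by
  induction k generalizing u with
  | zero => rw [Chain] at h ⊢; rw [h]
  | succ k ih =>
    obtain ⟨w, hw, hc⟩ := h
    exact ⟨p ++ w, rr_left p hw, ih hc⟩

lemma chain_right (q : List α) {k : ℕ} {u v : List α} (h : Chain (RR α) k u v) :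
    Chain (RR α) k (u ++ q) (v ++ q) := by
  induction k generalizing u with
  | zero => rw [Chain] at h ⊢; rw [h]
  | succ k ih =>
    obtain ⟨w, hw, hc⟩ := h
    exact ⟨w ++ q, rr_right q hw, ih hc⟩

lemma rr_symm {u v : List α} (h : RR α u v) : RR α v u := by
  rcases h with h | h | h
  · exact Or.inr (Or.inl h)
  · exact Or.inl h
  · obtain ⟨p, s, a, b, rfl, rfl⟩ := h
    exact Or.inr (Or.inr ⟨p, s, b, a, rfl, rfl⟩)

lemma chain_symm {k : ℕ} {u v : List α} (h : Chain (RR α) k u v) : Chain (RR α) k v u := by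
  induction k generalizing u with
  | zero => rw [Chain] at h ⊢; rw [h]
  | succ k ih =>
    obtain ⟨w, hw, hc⟩ := h
    have h1 : Chain (RR α) 1 w u := ⟨u, rr_symm hw, rfl⟩
    simpa using chain_append (ih hc) h1

lemma ed_le_of_chain {k : ℕ} {x y : List α} (h : Chain (RR α) k x y) : ed x y ≤ k :=
  Nat.sInf_le h

lemma ed_set_nonempty (x y : List α) :
    {k | Chain (RR α) k x y}.Nonempty := by
  refine ⟨x.length + y.length, chain_append (z := []) ?_ ?_⟩
  · simpa using chain_del x []
  · simpa using chain_ins [] y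

lemma ed_chain (x y : List α) : Chain (RR α) (ed x y) x y :=
  Nat.sInf_mem (ed_set_nonempty x y)

lemma ed_triangle (x y z : List α) : ed x z ≤ ed x y + ed y z :=
  ed_le_of_chain (chain_append (ed_chain x y) (ed_chain y z))

lemma ed_comm (x y : List α) : ed x y = ed y x :=
  le_antisymm (ed_le_of_chain (chain_symm (ed_chain y x)))
    (ed_le_of_chain (chain_symm (ed_chain x y)))

lemma ed_append (a a' c c' : List α) : ed (a ++ a') (c ++ c') ≤ ed a c + ed a' c' :=
  ed_le_of_chain (chain_append (chain_right a' (ed_chain a c)) (chain_left c (ed_chain a' c')))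

lemma ed_refl (x : List α) : ed x x = 0 :=
  Nat.le_zero.mp (ed_le_of_chain (show Chain (RR α) 0 x x from rfl))

lemma ed_del_prefix (P C : List α) : ed (P ++ C) C ≤ P.length :=
  ed_le_of_chain (chain_del P C)

lemma ed_ins_suffix (C Q : List α) : ed C (C ++ Q) ≤ Q.length :=
  ed_le_of_chain (chain_ins C Q)

lemma ed_nil_left (L : List α) : ed [] L ≤ L.length := by simpa using ed_ins_suffix [] L
lemma ed_nil_right (L : List α) : ed L [] ≤ L.length := by simpa using ed_del_prefix L []

lemma ed_single (a b : α) : ed [a] [b] ≤ 1 :=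
  ed_le_of_chain ⟨[b], Or.inr (Or.inr ⟨[], [], a, b, rfl, rfl⟩), rfl⟩

/-! ### Windows -/

def Wx (x : ℕ → α) (s m : ℕ) : List α := (List.range m).map fun i => x (s + i)

def Wy (y : ℕ → α) (u : ℤ) (m : ℕ) : List α := (List.range m).map fun i : ℕ => y (u + (i : ℤ)).toNat

@[simp] lemma Wx_length (x : ℕ → α) (s m : ℕ) : (Wx x s m).length = m := by simp [Wx]
@[simp] lemma Wy_length (y : ℕ → α) (u : ℤ) (m : ℕ) : (Wy y u m).length = m := by simp [Wy]

lemma Wx_add (x : ℕ → α) (s a c : ℕ) : Wx x s (a + c) = Wx x s a ++ Wx x (s + a) c := by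
  unfold Wx
  rw [List.range_add, List.map_append, List.map_map]
  congr 1
  apply List.map_congr_left
  intro i _
  simp [Function.comp]
  ring_nf

lemma Wy_add (y : ℕ → α) (u : ℤ) (a c : ℕ) : Wy y u (a + c) = Wy y u a ++ Wy y (u + a) c := by
  unfold Wy
  rw [List.range_add, List.map_append, List.map_map]
  congr 1
  apply List.map_congr_left
  intro i _
  simp only [Function.comp]
  congr 2
  push_cast
  ring

lemma Wx_blocks (x : ℕ → α) (m : ℕ) : ∀ (c : ℕ) (s : ℕ),
    Wx x s (c * m) = (((List.range c).map fun j => Wx x (s + j * m) m)).flatten := by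
  intro c
  induction c with
  | zero => intro s; simp [Wx]
  | succ c ih =>
    intro s
    rw [Nat.succ_mul, Wx_add, List.range_succ, List.map_append, List.flatten_append, ih]
    simp

lemma Wy_blocks (y : ℕ → α) (m : ℕ) : ∀ (c : ℕ) (u : ℤ),
    Wy y u (c * m) = (((List.range c).map fun j => Wy y (u + ((j * m : ℕ) : ℤ)) m)).flatten := by
  intro c
  induction c with
  | zero => intro u; simp [Wy]
  | succ c ih =>
    intro u
    rw [Nat.succ_mul, Wy_add, List.range_succ, List.map_append, List.flatten_append, ih]
    simp

lemma ed_shift_nat (y : ℕ → α) (u : ℤ) (d m : ℕ) :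
    ed (Wy y u m) (Wy y (u + (d : ℤ)) m) ≤ 2 * d := by
  rcases le_or_gt m d with hmd | hdm
  · calc ed (Wy y u m) (Wy y (u + (d : ℤ)) m)
        ≤ ed (Wy y u m) [] + ed [] (Wy y (u + (d : ℤ)) m) := ed_triangle _ _ _
      _ ≤ m + m := add_le_add ((ed_nil_right _).trans (by simp)) ((ed_nil_left _).trans (by simp))
      _ ≤ 2 * d := by omega
  · have hA := Wy_add y u d (m - d)
    rw [show d + (m - d) = m by omega] at hA
    have hB := Wy_add y (u + d) (m - d) d
    rw [show m - d + d = m by omega] at hB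
    calc ed (Wy y u m) (Wy y (u + (d : ℤ)) m)
        ≤ ed (Wy y u m) (Wy y (u + d) (m - d)) + ed (Wy y (u + d) (m - d)) (Wy y (u + d) m) :=
          ed_triangle _ _ _
      _ ≤ d + d := by
          refine add_le_add ?_ ?_
          · rw [hA]
            exact (ed_del_prefix (Wy y u d) (Wy y (u + d) (m - d))).trans (by simp)
          · rw [hB]
            exact (ed_ins_suffix (Wy y (u + d) (m - d)) (Wy y (u + d + (m - d : ℕ)) d)).trans
              (by simp)
      _ ≤ 2 * d := by omega

lemma ed_shift (y : ℕ → α) (u r : ℤ) (m : ℕ) :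
    ed (Wy y u m) (Wy y (u + r) m) ≤ 2 * r.natAbs := by
  rcases le_or_gt 0 r with hr | hr
  · obtain ⟨d, rfl⟩ := Int.eq_ofNat_of_zero_le hr
    simpa using ed_shift_nat y u d m
  · have hd : u + r + (r.natAbs : ℤ) = u := by omega
    rw [ed_comm]
    have := ed_shift_nat y (u + r) r.natAbs m
    rwa [hd] at this

lemma ed_flatten_le (A B : ℕ → List α) (D : ℕ → ℝ) :
    ∀ c : ℕ, (∀ j < c, (ed (A j) (B j) : ℝ) ≤ D j) →
      (ed (((List.range c).map A).flatten) (((List.range c).map B).flatten) : ℝ) ≤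
        ∑ j ∈ Finset.range c, D j := by
  intro c
  induction c with
  | zero => intro _; simp [ed_refl]
  | succ c ih =>
    intro h
    rw [List.range_succ, List.map_append, List.map_append, List.flatten_append, List.flatten_append,
      Finset.sum_range_succ]
    calc (ed (((List.range c).map A).flatten ++ ([A c].flatten))
            (((List.range c).map B).flatten ++ ([B c].flatten)) : ℝ)
        ≤ (ed (((List.range c).map A).flatten) (((List.range c).map B).flatten) : ℝ)
            + (ed ([A c].flatten) ([B c].flatten) : ℝ) := by
          exact_mod_cast Nat.cast_le.mpr (ed_append _ _ _ _)
      _ ≤ ∑ j ∈ Finset.range c, D j + D c := by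
          refine add_le_add (ih fun j hj => h j (by omega)) ?_
          simpa using h c (by omega)

end EditDist

lemma main_bound {α : Type*} (x y : ℕ → α) (n b : ℕ) (hb : 0 < b) :
    ∀ (k : ℕ) (s : ℕ) (u : ℤ), (ed (Wx x s (b ^ k)) (Wy y u (b ^ k)) : ℝ) ≤
      2 * Edist x y n b k s u := by
  intro k
  induction k with
  | zero =>
    intro s u
    have hr1 : List.range 1 = [0] := rfl
    have hx : Wx x s (b ^ 0) = [x s] := by simp [Wx, hr1]
    have hy : Wy y u (b ^ 0) = [y u.toNat] := by simp [Wy, hr1]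
    rw [hx, hy]
    rw [show Edist x y n b 0 s u =
      if 0 ≤ u ∧ u < (n : ℤ) ∧ x s = y u.toNat then 0 else 1 from rfl]
    split
    · next hc =>
      rw [hc.2.2, ed_refl]
      simp
    · have := ed_single (x s) (y u.toNat)
      push_cast
      calc (ed [x s] [y u.toNat] : ℝ) ≤ 1 := by exact_mod_cast this
        _ ≤ 2 * 1 := by norm_num
  | succ k ih =>
    intro s u
    refine le_of_forall_pos_le_add fun ε hε => ?_
    set m := b ^ k with hm
    set ε' := ε / (2 * b) with hε'def
    have hε' : 0 < ε' := by
      apply div_pos hε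
      positivity
    set F : ℕ → ℤ → ℝ := fun j r =>
      Edist x y n b k (s + j * m) (u + (j : ℤ) * (b : ℤ) ^ k + r) + |(r : ℝ)| with hF
    have hsel : ∀ j : ℕ, ∃ r : ℤ, F j r < (⨅ r : ℤ, F j r) + ε' := fun j =>
      exists_lt_of_ciInf_lt (lt_add_of_pos_right _ hε')
    choose r hr using hsel
    -- blocks
    have hXblocks : Wx x s (b ^ (k + 1)) =
        (((List.range b).map fun j => Wx x (s + j * m) m)).flatten := by
      rw [show b ^ (k + 1) = b * m by rw [hm]; ring]
      exact Wx_blocks x m b s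
    have hYblocks : Wy y u (b ^ (k + 1)) =
        (((List.range b).map fun j : ℕ => Wy y (u + (j : ℤ) * (b : ℤ) ^ k) m)).flatten := by
      rw [show b ^ (k + 1) = b * m by rw [hm]; ring]
      rw [Wy_blocks y m b u]
      congr 1
    have key : ∀ j < b, (ed (Wx x (s + j * m) m)
        (Wy y (u + (j : ℤ) * (b : ℤ) ^ k) m) : ℝ) ≤ 2 * ((⨅ r : ℤ, F j r) + ε') := by
      intro j _
      set v : ℤ := u + (j : ℤ) * (b : ℤ) ^ k with hv
      have htri : (ed (Wx x (s + j * m) m) (Wy y v m) : ℝ) ≤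
          (ed (Wx x (s + j * m) m) (Wy y (v + r j) m) : ℝ) +
          (ed (Wy y (v + r j) m) (Wy y v m) : ℝ) := by
        exact_mod_cast Nat.cast_le.mpr (ed_triangle _ _ _)
      have h1 : (ed (Wx x (s + j * m) m) (Wy y (v + r j) m) : ℝ) ≤
          2 * Edist x y n b k (s + j * m) (v + r j) := ih (s + j * m) (v + r j)
      have h2 : (ed (Wy y (v + r j) m) (Wy y v m) : ℝ) ≤ 2 * |((r j : ℤ) : ℝ)| := by
        rw [ed_comm]
        have := ed_shift y v (r j) m
        calc (ed (Wy y v m) (Wy y (v + r j) m) : ℝ) ≤ (2 * (r j).natAbs : ℕ) := by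
              exact_mod_cast this
          _ = 2 * |((r j : ℤ) : ℝ)| := by push_cast [Nat.cast_natAbs]; ring
      have := hr j
      rw [hF] at this
      calc (ed (Wx x (s + j * m) m) (Wy y v m) : ℝ)
          ≤ 2 * Edist x y n b k (s + j * m) (v + r j) + 2 * |((r j : ℤ) : ℝ)| :=
            le_trans htri (add_le_add h1 h2)
        _ = 2 * F j (r j) := by rw [hF, hv]; ring
        _ ≤ 2 * ((⨅ r : ℤ, F j r) + ε') := by nlinarith [hr j]
    have hsum := ed_flatten_le (fun j => Wx x (s + j * m) m)
      (fun j : ℕ => Wy y (u + (j : ℤ) * (b : ℤ) ^ k) m)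
      (fun j => 2 * ((⨅ r : ℤ, F j r) + ε')) b key
    rw [← hXblocks, ← hYblocks] at hsum
    have hEd : Edist x y n b (k + 1) s u = ∑ j ∈ Finset.range b, ⨅ r : ℤ, F j r := rfl
    calc (ed (Wx x s (b ^ (k + 1))) (Wy y u (b ^ (k + 1))) : ℝ)
        ≤ ∑ j ∈ Finset.range b, 2 * ((⨅ r : ℤ, F j r) + ε') := hsum
      _ = 2 * ∑ j ∈ Finset.range b, (⨅ r : ℤ, F j r) + b * (2 * ε') := by
          rw [Finset.sum_congr rfl (fun j _ => by ring : ∀ j ∈ Finset.range b,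
            2 * ((⨅ r : ℤ, F j r) + ε') = 2 * (⨅ r : ℤ, F j r) + 2 * ε')]
          rw [Finset.sum_add_distrib, Finset.mul_sum]
          simp [mul_comm]
      _ = 2 * Edist x y n b (k + 1) s u + ε := by
          rw [hEd]
          congr 1
          rw [hε'def]
          field_simp


theorem stmt14 {α : Type*} (b h : ℕ) (hb : 2 ≤ b) (x y : ℕ → α) :
    ((ed (List.ofFn fun i : Fin (b ^ h) => x i) (List.ofFn fun i : Fin (b ^ h) => y i) : ℝ)) ≤
      2 * Edist x y (b ^ h) b h 0 0 := by
  have h0 : (List.ofFn fun i : Fin (b ^ h) => x i) = Wx x 0 (b ^ h) := by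
    apply List.ext_getElem <;> simp [Wx]
  have h1 : (List.ofFn fun i : Fin (b ^ h) => y i) = Wy y 0 (b ^ h) := by
    apply List.ext_getElem <;> simp [Wy]
  rw [h0, h1]
  exact main_bound x y (b ^ h) b (by omega) h 0 0
end
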